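/- Suppose the survival function S satisfies lim_n √n·ψ(n)/S(n) = 0, where ψ(n) = S(n−1) − S(n). Then for each M > 0, lim_n S(n − M√n)/S(n + M√n) = 1. -/

import Mathlib

open MeasureTheory ProbabilityTheory Filter

/-- if `√n·ψ(n)/S(n) → 0` with `ψ(n) = S(n−1) − S(n)`, then for each
`M > 0`, `S(n − M√n)/S(n + M√n) → 1`. -/
theorem survival_window_ratio_tendsto_one
    {Ω : Type*} [MeasureSpace Ω] [IsProbabilityMeasure (ℙ : Measure Ω)]
    (X : Ω → ℝ) (hX : Measurable X) (hXpos : ∀ ω, 0 < X ω)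
    (S : ℝ → ℝ) (hS : ∀ x, S x = (ℙ {ω | x < X ω}).toReal) (hSpos : ∀ x, 0 < S x)
    (ψ : ℕ → ℝ) (hψ : ∀ n : ℕ, ψ n = S ((n : ℝ) - 1) - S n)
    (hcond : Tendsto (fun n : ℕ => Real.sqrt n * ψ n / S n) atTop (nhds 0)) :
    ∀ M : ℝ, 0 < M →
      Tendsto (fun n : ℕ => S ((n : ℝ) - M * Real.sqrt n) / S ((n : ℝ) + M * Real.sqrt n))
        atTop (nhds 1) := by
  have hanti : Antitone S := by
    intro x y hxy
    rw [hS, hS]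
    exact ENNReal.toReal_mono (measure_ne_top _ _)
      (measure_mono fun ω hω => lt_of_le_of_lt hxy hω)
  have haan : ∀ k : ℕ, 0 ≤ ψ k / S k := fun k => by
    apply div_nonneg _ (hSpos _).le
    rw [hψ]; exact sub_nonneg.2 (hanti (by linarith))
  have hfac : ∀ k : ℕ, S ((k:ℝ) - 1) / S k = 1 + ψ k / S k := fun k => by
    have h := (hSpos ((k:ℝ))).ne'
    rw [hψ]
    field_simp
    ring
  have tele : ∀ m q : ℕ, m ≤ q →
      S ((m:ℝ) - 1) / S q = ∏ k ∈ Finset.Icc m q, (S ((k:ℝ) - 1) / S k) := by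
    intro m q hmq
    induction q, hmq using Nat.le_induction with
    | base => rw [Finset.Icc_self, Finset.prod_singleton]
    | succ q hq ih =>
      rw [Finset.prod_Icc_succ_top (hq.trans (Nat.le_succ q)), ← ih]
      have h1 : ((q+1:ℕ):ℝ) - 1 = (q:ℕ) := by push_cast; ring
      rw [h1, div_mul_div_comm, mul_comm (S ((m:ℝ)-1)) (S (q:ℕ)),
        mul_div_mul_left _ _ (hSpos ((q:ℕ):ℝ)).ne']
  intro M hM
  have hhalf : ∀ᶠ n : ℕ in atTop, M * Real.sqrt n ≤ (n:ℝ)/2 := by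
    filter_upwards [(tendsto_natCast_atTop_atTop (R := ℝ)).eventually_ge_atTop (4*M^2)]
      with n hn
    have hs := Real.sq_sqrt (by positivity : (0:ℝ) ≤ (n:ℝ))
    have h2M : 2*M ≤ Real.sqrt n := by nlinarith [Real.sqrt_nonneg (n:ℝ)]
    nlinarith [Real.sqrt_nonneg (n:ℝ)]
  have hInf : Tendsto (fun n : ℕ => (n:ℝ) - M * Real.sqrt n) atTop atTop := by
    apply tendsto_atTop_mono' atTop (f₁ := fun n : ℕ => (n:ℝ)/2)
    · filter_upwards [hhalf] with n hn
      linarith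
    · exact (tendsto_natCast_atTop_atTop (R := ℝ)).atTop_div_const two_pos
  set m : ℕ → ℕ := fun n => ⌈(n:ℝ) - M * Real.sqrt n⌉₊ with hm_def
  set q : ℕ → ℕ := fun n => ⌊(n:ℝ) + M * Real.sqrt n⌋₊ + 1 with hq_def
  set T : ℕ → ℝ := fun n => ∑ k ∈ Finset.Icc (m n) (q n), ψ k / S k with hT_def
  have hTnonneg : ∀ n, 0 ≤ T n := fun n => Finset.sum_nonneg fun k _ => haan k
  have hT0 : Tendsto T atTop (nhds 0) := by
    rw [Metric.tendsto_atTop] at hcond ⊢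
    intro ε hε
    have hD : (0:ℝ) < Real.sqrt 2 * (2*M+2) + 1 := by nlinarith [Real.sqrt_nonneg 2]
    set ε' := ε / (Real.sqrt 2 * (2*M+2) + 1) with hε'def
    have hε' : 0 < ε' := div_pos hε hD
    obtain ⟨N₀, hN₀⟩ := hcond ε' hε'
    obtain ⟨N₁, hN₁⟩ := eventually_atTop.1 (hhalf.and
      ((tendsto_natCast_atTop_atTop (R := ℝ)).eventually_ge_atTop (2*((N₀:ℝ)+1))))
    refine ⟨max N₁ 2, fun n hn => ?_⟩
    have hn1 : N₁ ≤ n := le_trans (le_max_left _ _) hn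
    have hn2 : (2:ℕ) ≤ n := le_trans (le_max_right _ _) hn
    obtain ⟨hhalfn, hNn⟩ := hN₁ n hn1
    have hs1 : (1:ℝ) ≤ Real.sqrt n := by
      rw [show (1:ℝ) = Real.sqrt 1 from (Real.sqrt_one).symm]
      exact Real.sqrt_le_sqrt (by exact_mod_cast Nat.one_le_of_lt hn2)
    have hsn : 0 < Real.sqrt ((n:ℝ)/2) := Real.sqrt_pos.2 (by
      have : (0:ℝ) < N₀ + 1 := by positivity
      linarith)
    have hmn : ((n:ℝ))/2 ≤ (m n : ℝ) :=
      le_trans (by linarith) (Nat.le_ceil _)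
    have hbound : ∀ k ∈ Finset.Icc (m n) (q n),
        ψ k / S k ≤ ε' / Real.sqrt ((n:ℝ)/2) := by
      intro k hk
      have hkm : m n ≤ k := (Finset.mem_Icc.1 hk).1
      have hkR : (n:ℝ)/2 ≤ (k:ℝ) := le_trans hmn (by exact_mod_cast hkm)
      have hkN : N₀ ≤ k := by
        have h1 : (N₀:ℝ) ≤ (k:ℝ) := by linarith
        exact_mod_cast h1
      have hsk : Real.sqrt ((n:ℝ)/2) ≤ Real.sqrt k := Real.sqrt_le_sqrt hkR
      have hb := hN₀ k hkN
      rw [Real.dist_eq, sub_zero, mul_div_assoc] at hb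
      have hb' : Real.sqrt k * (ψ k / S k) ≤ ε' := le_of_lt (lt_of_abs_lt hb)
      have h1 : ψ k / S k ≤ ε' / Real.sqrt k := by
        rw [le_div_iff₀ (lt_of_lt_of_le hsn hsk), mul_comm]
        exact hb'
      exact le_trans h1 (div_le_div_of_nonneg_left hε'.le hsn hsk)
    have hsum := Finset.sum_le_card_nsmul _ _ _ hbound
    have hmq : m n ≤ q n := le_trans
      (Nat.ceil_mono (by nlinarith [Real.sqrt_nonneg (n:ℝ)]))
      (Nat.ceil_le_floor_add_one _)
    have hcard : ((Finset.Icc (m n) (q n)).card : ℝ) ≤ 2*M*Real.sqrt n + 2 := by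
      rw [Nat.card_Icc, Nat.cast_sub (hmq.trans (Nat.le_succ _))]
      have hq1 : ((q n:ℝ)) ≤ (n:ℝ) + M*Real.sqrt n + 1 := by
        simp only [hq_def]
        push_cast
        have h0 : (0:ℝ) ≤ (n:ℝ) + M*Real.sqrt n :=
          add_nonneg (Nat.cast_nonneg n) (mul_nonneg hM.le (Real.sqrt_nonneg _))
        linarith [Nat.floor_le h0]
      have hm1 : (n:ℝ) - M*Real.sqrt n ≤ (m n : ℝ) := Nat.le_ceil _
      have hfl : ((⌊(n:ℝ) + M*Real.sqrt n⌋₊ : ℕ) : ℝ) ≤ (n:ℝ) + M*Real.sqrt n :=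
        Nat.floor_le (add_nonneg (Nat.cast_nonneg n)
          (mul_nonneg hM.le (Real.sqrt_nonneg (n:ℝ))))
      push_cast
      linarith
    rw [Real.dist_eq, sub_zero, abs_of_nonneg (hTnonneg n)]
    have hB : 0 ≤ ε' / Real.sqrt ((n:ℝ)/2) := div_nonneg hε'.le hsn.le
    have hTle : T n ≤ (2*M*Real.sqrt n + 2) * (ε' / Real.sqrt ((n:ℝ)/2)) := by
      calc T n ≤ (Finset.Icc (m n) (q n)).card • (ε' / Real.sqrt ((n:ℝ)/2)) := hsum
        _ = ((Finset.Icc (m n) (q n)).card : ℝ) * (ε' / Real.sqrt ((n:ℝ)/2)) :=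
            nsmul_eq_mul _ _
        _ ≤ _ := mul_le_mul_of_nonneg_right hcard hB
    have hs2 : Real.sqrt ((n:ℝ)/2) = Real.sqrt n / Real.sqrt 2 :=
      Real.sqrt_div (Nat.cast_nonneg n) 2
    have hkey : (2*M*Real.sqrt n + 2) * (ε' / Real.sqrt ((n:ℝ)/2))
        ≤ ε' * (Real.sqrt 2 * (2*M+2)) := by
      rw [hs2, div_div_eq_mul_div, ← mul_div_assoc,
        div_le_iff₀ (lt_of_lt_of_le one_pos hs1)]
      nlinarith [mul_nonneg (mul_nonneg hε'.le (Real.sqrt_nonneg 2))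
        (by linarith : (0:ℝ) ≤ Real.sqrt n - 1)]
    have hfin : ε' * (Real.sqrt 2 * (2*M+2)) < ε := by
      rw [hε'def, div_mul_eq_mul_div, div_lt_iff₀ hD]
      nlinarith
    linarith
  have hub : ∀ᶠ n : ℕ in atTop,
      S ((n:ℝ) - M*Real.sqrt n) / S ((n:ℝ) + M*Real.sqrt n) ≤ Real.exp (T n) := by
    filter_upwards [hInf.eventually_ge_atTop 1] with n hn1
    have h0 : (0:ℝ) ≤ (n:ℝ) - M * Real.sqrt n := by linarith
    have hMs : (0:ℝ) ≤ M * Real.sqrt n := mul_nonneg hM.le (Real.sqrt_nonneg _)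
    have hxly : (n:ℝ) - M * Real.sqrt n ≤ (n:ℝ) + M * Real.sqrt n := by linarith
    have hmle : (m n : ℝ) - 1 ≤ (n:ℝ) - M * Real.sqrt n := by
      have h := Nat.ceil_lt_add_one h0
      simp only [hm_def]
      linarith
    have hqge : (n:ℝ) + M * Real.sqrt n ≤ (q n : ℝ) := by
      have h := Nat.lt_floor_add_one ((n:ℝ) + M * Real.sqrt n)
      simp only [hq_def]
      push_cast
      linarith
    have hmq : m n ≤ q n :=
      le_trans (Nat.ceil_mono hxly) (Nat.ceil_le_floor_add_one _)
    calc S ((n:ℝ) - M*Real.sqrt n) / S ((n:ℝ) + M*Real.sqrt n)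
        ≤ S ((m n:ℝ) - 1) / S (q n) :=
          div_le_div₀ (hSpos _).le (hanti hmle) (hSpos _) (hanti hqge)
      _ = ∏ k ∈ Finset.Icc (m n) (q n), (S ((k:ℝ) - 1) / S k) := tele (m n) (q n) hmq
      _ ≤ ∏ k ∈ Finset.Icc (m n) (q n), Real.exp (ψ k / S k) := by
          apply Finset.prod_le_prod
          · intro k _
            rw [hfac k]
            linarith [haan k]
          · intro k _
            rw [hfac k]
            linarith [Real.add_one_le_exp (ψ k / S k)]
      _ = Real.exp (T n) := (Real.exp_sum _ _).symm
  have hlb : ∀ᶠ n : ℕ in atTop,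
      (1:ℝ) ≤ S ((n:ℝ) - M*Real.sqrt n) / S ((n:ℝ) + M*Real.sqrt n) := by
    apply Eventually.of_forall
    intro n
    have hMs : (0:ℝ) ≤ M * Real.sqrt n := mul_nonneg hM.le (Real.sqrt_nonneg _)
    rw [le_div_iff₀ (hSpos _), one_mul]
    exact hanti (by linarith)
  have hexp : Tendsto (fun n => Real.exp (T n)) atTop (nhds 1) := by
    have h := (Real.continuous_exp.tendsto 0).comp hT0
    simpa [Function.comp_def] using h
  exact tendsto_of_tendsto_of_tendsto_of_le_of_le' tendsto_const_nhds hexp hlb hub
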